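/- Let S be a multiplicatively closed subset of R consisting of regular elements (non-zerodivisors), and N a semi n-submodule of an R-module M such that ⋃_{s∈S}(N :_M s) ≠ M. Then S⁻¹N is a semi n-submodule of the S⁻¹R-module S⁻¹M. -/

import Mathlib

def IsSemiNSubmodule (R M : Type*) [CommRing R] [AddCommGroup M] [Module R M]
    (N : Submodule R M) : Prop :=
  N ≠ ⊤ ∧ ∀ (r : R) (m : M), r ^ 2 • m ∈ N → ¬ IsNilpotent r →
    (∀ s : R, s • m = 0 → s = 0) → r • m ∈ N

theorem localized_semiN (R M : Type*) [CommRing R] [AddCommGroup M] [Module R M]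
    (S : Submonoid R) (hS : (S : Set R) ⊆ (nonZeroDivisors R : Set R))
    (N : Submodule R M) (hN : IsSemiNSubmodule R M N)
    (hU : (⋃ s ∈ S, {m : M | s • m ∈ N}) ≠ Set.univ) :
    IsSemiNSubmodule (Localization S) (LocalizedModule S M) (N.localized S) := by
  constructor
  · -- properness
    intro htop
    obtain ⟨m, hm⟩ := (Set.ne_univ_iff_exists_notMem _).mp hU
    simp only [Set.mem_iUnion, Set.mem_setOf_eq, not_exists] at hm
    have : LocalizedModule.mk m 1 ∈ N.localized S := htop ▸ Submodule.mem_top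
    obtain ⟨n, hn, u, hu⟩ := this
    rw [← IsLocalizedModule.mk_eq_mk'] at hu
    rw [LocalizedModule.mk_eq] at hu
    obtain ⟨c, hc⟩ := hu
    -- hc : c • 1 • n = c • u • m
    apply hm (c * u) (mul_mem c.2 u.2)
    have : ((c : R) * u) • m = (c : R) • n := by
      rw [mul_smul]
      simpa [Submonoid.smul_def] using hc.symm
    rw [this]
    exact N.smul_mem _ hn
  · intro r x hr2 hnil hann
    obtain ⟨⟨a, s⟩, rfl⟩ : ∃ p : R × S, Localization.mk p.1 p.2 = r := by
      induction r using Localization.induction_on with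
      | H p => exact ⟨p, rfl⟩
    obtain ⟨m, t, rfl⟩ : ∃ (m : M) (t : S), LocalizedModule.mk m t = x := by
      induction x using LocalizedModule.induction_on with
      | h m t => exact ⟨m, t, rfl⟩
    rw [show (Localization.mk a s) ^ 2 = Localization.mk (a ^ 2) (s ^ 2) from
      Localization.mk_pow 2 a s, LocalizedModule.mk_smul_mk] at hr2
    obtain ⟨n, hn, u, hu⟩ := hr2
    rw [← IsLocalizedModule.mk_eq_mk', LocalizedModule.mk_eq] at hu
    obtain ⟨c, hc⟩ := hu
    -- hc : c • (s^2 * t) • n = c • u • (a^2 • m)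
    set v : S := c * u with hv
    have hvN : a ^ 2 • ((v : R) • m) ∈ N := by
      have : ((v : R)) • (a ^ 2 • m) = ((c : R) * (s ^ 2 * t : S)) • n := by
        rw [hv]
        push_cast
        rw [mul_smul, mul_smul]
        exact hc.symm
      rw [smul_comm] at this
      rw [this]
      exact N.smul_mem _ hn
    have hanil : ¬ IsNilpotent a := by
      rintro ⟨k, hk⟩
      exact hnil ⟨k, by rw [Localization.mk_pow, hk, Localization.mk_zero]⟩
    have hfaith : ∀ b : R, b • ((v : R) • m) = 0 → b = 0 := by
      intro b hb
      have h1 : (Localization.mk b 1 : Localization S) • LocalizedModule.mk m t = 0 := by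
        rw [LocalizedModule.mk_smul_mk, one_mul, ← LocalizedModule.zero_mk t,
          LocalizedModule.mk_eq]
        refine ⟨v, ?_⟩
        simp only [smul_zero, Submonoid.smul_def]
        rw [smul_comm ((v : R)) ((t : R)), smul_smul (v : R) b, mul_comm, mul_smul, hb, smul_zero]
      have h2 := hann _ h1
      rw [Localization.mk_one_eq_algebraMap] at h2
      exact IsLocalization.injective (Localization S) hS (by simpa using h2)
    have key : a • ((v : R) • m) ∈ N := hN.2 a _ hvN hanil hfaith
    rw [LocalizedModule.mk_smul_mk]
    refine ⟨(v : R) • (a • m), by rwa [smul_comm] at key, v * (s * t), ?_⟩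
    rw [← IsLocalizedModule.mk_eq_mk']
    exact LocalizedModule.mk_cancel_common_left v (s * t) (a • m)
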